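/- Let M > 0, ε > 0, N a positive integer, and let ν′ be a probability measure supported in [0,M]. Then every Young diagram λ with at most N rows satisfying d(μ̂^N_λ, ν′) < 3ε/2 has l_j = λ_j + N − j ≤ 2N²ε + NM for all 1 ≤ j ≤ N. Consequently, the number of Young diagrams λ with at most N rows satisfying d(μ̂^N_λ, ν′) < 3ε/2 is at most (2N²ε + NM + 1)^N. -/
import Mathlib


/-- The (Dudley) bounded-Lipschitz distance between two measures on `ℝ`:
`d(μ, ν) = sup |∫ f dμ - ∫ f dν|`, the supremum running over all bounded Lipschitz
functions `f : ℝ → ℝ` with Lipschitz constant at most `1`. -/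
noncomputable def dudleyDist (μ ν : MeasureTheory.Measure ℝ) : ℝ :=
  sSup {r : ℝ | ∃ f : ℝ → ℝ, (∃ C, ∀ x, |f x| ≤ C) ∧ LipschitzWith 1 f ∧
    r = |(∫ x, f x ∂μ) - ∫ x, f x ∂ν|}

/-- The empirical measure `μ̂^N_λ = (1/N) ∑_{i=1}^N δ_{(λ_i + N - i)/N}` of a Young diagram
`λ` with at most `N` rows (0-indexed: row `i` contributes the atom `(λ_i + N - 1 - i)/N`). -/
noncomputable def empYoung (N : ℕ) (lam : Fin N → ℕ) : MeasureTheory.Measure ℝ :=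
  (N : ENNReal)⁻¹ • ∑ i : Fin N,
    MeasureTheory.Measure.dirac (((lam i + (N - 1 - (i : ℕ)) : ℕ) : ℝ) / N)

open MeasureTheory

lemma integrable_dirac_of_continuous {g : ℝ → ℝ} (hg : Continuous g) (a : ℝ) :
    Integrable g (Measure.dirac a) := by
  refine ⟨hg.aestronglyMeasurable, ?_⟩
  simp [HasFiniteIntegral, lintegral_dirac]

lemma integral_empYoung (N : ℕ) (lam : Fin N → ℕ) {g : ℝ → ℝ} (hg : Continuous g) :
    ∫ x, g x ∂(empYoung N lam)
      = (N : ℝ)⁻¹ * ∑ i : Fin N, g (((lam i + (N - 1 - (i : ℕ)) : ℕ) : ℝ) / N) := by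
  rw [empYoung, integral_smul_measure,
    integral_finset_sum_measure (fun i _ => integrable_dirac_of_continuous hg _)]
  simp [integral_dirac, smul_eq_mul]

/-- Main pointwise bound. -/
lemma young_key (M ε : ℝ) (hM : 0 < M) (hε : 0 < ε)
    (N : ℕ) (hN : 0 < N) (ν' : Measure ℝ) [IsProbabilityMeasure ν']
    (hsupp : ν' (Set.Icc 0 M)ᶜ = 0) (lam : Fin N → ℕ)
    (hd : dudleyDist (empYoung N lam) ν' < 3 * ε / 2) (j : Fin N) :
    ((lam j + (N - 1 - (j : ℕ)) : ℕ) : ℝ) ≤ 2 * (N : ℝ) ^ 2 * ε + N * M := by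
  set x : Fin N → ℝ := fun i => ((lam i + (N - 1 - (i : ℕ)) : ℕ) : ℝ) / N with hxdef
  have hNR : (0 : ℝ) < N := by exact_mod_cast hN
  have hxnn : ∀ i, 0 ≤ x i := fun i => div_nonneg (Nat.cast_nonneg _) hNR.le
  -- integrability of any Lipschitz g against ν'
  have hintν : ∀ (g : ℝ → ℝ), (∃ C, ∀ t, |g t| ≤ C) → LipschitzWith 1 g →
      Integrable g ν' := by
    rintro g ⟨C, hC⟩ hLip
    exact Integrable.mono' (integrable_const C) hLip.continuous.aestronglyMeasurable
      (Filter.Eventually.of_forall fun t => by simpa using hC t)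
  -- ν'-a.e. membership in [0, M]
  have hae : ∀ᵐ t ∂ν', t ∈ Set.Icc (0:ℝ) M := by
    rw [MeasureTheory.ae_iff]
    exact measure_mono_null (fun t ht => ht) hsupp
  -- a uniform bound for the supremum set
  have hbdd : BddAbove {r : ℝ | ∃ f : ℝ → ℝ, (∃ C, ∀ t, |f t| ≤ C) ∧ LipschitzWith 1 f ∧
      r = |(∫ t, f t ∂(empYoung N lam)) - ∫ t, f t ∂ν'|} := by
    refine ⟨(N : ℝ)⁻¹ * (∑ i, x i) + M, ?_⟩
    rintro r ⟨g, hgB, hgL, rfl⟩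
    have hcont : Continuous g := hgL.continuous
    have h1 : ∫ t, g t ∂(empYoung N lam) = (N : ℝ)⁻¹ * ∑ i, g (x i) :=
      integral_empYoung N lam hcont
    have hdist : ∀ a b : ℝ, |g a - g b| ≤ |a - b| := fun a b => by
      have := hgL.dist_le_mul a b
      simpa [Real.dist_eq] using this
    have hA : |(N : ℝ)⁻¹ * ∑ i, g (x i) - g 0| ≤ (N : ℝ)⁻¹ * ∑ i, x i := by
      have hsum : (N : ℝ)⁻¹ * ∑ i, g (x i) - g 0
          = (N : ℝ)⁻¹ * ∑ i, (g (x i) - g 0) := by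
        rw [Finset.sum_sub_distrib]
        simp [Finset.sum_const, mul_sub]
        field_simp
      rw [hsum, abs_mul, abs_inv, abs_of_nonneg (Nat.cast_nonneg (α := ℝ) N)]
      refine mul_le_mul_of_nonneg_left ?_ (inv_nonneg.2 hNR.le)
      refine (Finset.abs_sum_le_sum_abs _ _).trans (Finset.sum_le_sum fun i _ => ?_)
      have := hdist (x i) 0
      simpa [abs_of_nonneg (hxnn i)] using this
    have hB : |g 0 - ∫ t, g t ∂ν'| ≤ M := by
      have hint : Integrable g ν' := hintν g hgB hgL
      have : g 0 - ∫ t, g t ∂ν' = ∫ t, (g 0 - g t) ∂ν' := by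
        rw [integral_sub (integrable_const _) hint, integral_const]
        simp
      rw [this]
      have hbd : ∀ᵐ t ∂ν', ‖g 0 - g t‖ ≤ M := by
        filter_upwards [hae] with t ht
        have h1 : |g 0 - g t| ≤ |0 - t| := hdist 0 t
        have h2 : |0 - t| ≤ M := by
          rw [zero_sub, abs_neg, abs_of_nonneg ht.1]; exact ht.2
        simpa using h1.trans h2
      have := norm_integral_le_of_norm_le_const (μ := ν') hbd
      simpa using this
    calc |(∫ t, g t ∂(empYoung N lam)) - ∫ t, g t ∂ν'|
        ≤ |(N : ℝ)⁻¹ * ∑ i, g (x i) - g 0| + |g 0 - ∫ t, g t ∂ν'| := by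
          rw [h1]; exact abs_sub_le _ _ _
      _ ≤ (N : ℝ)⁻¹ * ∑ i, x i + M := add_le_add hA hB
  -- now argue by contradiction
  by_contra hcon
  push_neg at hcon
  have hxj : 2 * N * ε + M < x j := by
    rw [hxdef]
    rw [lt_div_iff₀ hNR]
    nlinarith [hcon]
  set c : ℝ := 2 * N * ε with hc
  have hcpos : 0 < c := by positivity
  set f : ℝ → ℝ := fun t => min (max (t - M) 0) c with hf
  have hfLip : LipschitzWith 1 f := by
    have h1 : LipschitzWith 1 (fun t : ℝ => t - M) := by
      simpa using (LipschitzWith.id (α := ℝ)).sub (LipschitzWith.const M)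
    exact (h1.max_const 0).min_const c
  have hfnn : ∀ t, 0 ≤ f t := fun t => le_min (le_max_right _ _) hcpos.le
  have hfle : ∀ t, f t ≤ c := fun t => min_le_right _ _
  have hfbd : ∀ t, |f t| ≤ c := fun t => by
    rw [abs_of_nonneg (hfnn t)]; exact hfle t
  have hf0 : ∀ t ∈ Set.Icc (0:ℝ) M, f t = 0 := by
    intro t ht
    have : max (t - M) 0 = 0 := max_eq_right (by linarith [ht.2])
    simp [hf, this, hcpos.le]
  have hIν : ∫ t, f t ∂ν' = 0 := by
    refine integral_eq_zero_of_ae ?_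
    filter_upwards [hae] with t ht
    simpa using hf0 t ht
  have hfxj : f (x j) = c := by
    have h1 : max (x j - M) 0 = x j - M := max_eq_left (by linarith)
    rw [hf]
    simp only [h1]
    exact min_eq_right (by linarith)
  have hIμ : 2 * ε ≤ ∫ t, f t ∂(empYoung N lam) := by
    rw [integral_empYoung N lam hfLip.continuous]
    have hsum : f (x j) ≤ ∑ i, f (x i) :=
      Finset.single_le_sum (fun i _ => hfnn (x i)) (Finset.mem_univ j)
    have : (N : ℝ)⁻¹ * c ≤ (N : ℝ)⁻¹ * ∑ i, f (x i) := by
      apply mul_le_mul_of_nonneg_left _ (inv_nonneg.2 hNR.le)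
      rw [← hfxj]; exact hsum
    calc 2 * ε = (N : ℝ)⁻¹ * c := by field_simp [hc]; ring
      _ ≤ _ := this
  have hmem : |(∫ t, f t ∂(empYoung N lam)) - ∫ t, f t ∂ν'|
      ∈ {r : ℝ | ∃ g : ℝ → ℝ, (∃ C, ∀ t, |g t| ≤ C) ∧ LipschitzWith 1 g ∧
        r = |(∫ t, g t ∂(empYoung N lam)) - ∫ t, g t ∂ν'|} :=
    ⟨f, ⟨c, hfbd⟩, hfLip, rfl⟩
  have hle : |(∫ t, f t ∂(empYoung N lam)) - ∫ t, f t ∂ν'|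
      ≤ dudleyDist (empYoung N lam) ν' := le_csSup hbdd hmem
  rw [hIν, sub_zero, abs_of_nonneg (le_trans (by positivity) hIμ)] at hle
  linarith

theorem young_diagrams_near_compact_measure (M ε : ℝ) (hM : 0 < M) (hε : 0 < ε)
    (N : ℕ) (hN : 0 < N) (ν' : Measure ℝ) [IsProbabilityMeasure ν']
    (hsupp : ν' (Set.Icc 0 M)ᶜ = 0) :
    (∀ lam : Fin N → ℕ, Antitone lam → dudleyDist (empYoung N lam) ν' < 3 * ε / 2 →
      ∀ j : Fin N, ((lam j + (N - 1 - (j : ℕ)) : ℕ) : ℝ) ≤ 2 * (N : ℝ) ^ 2 * ε + N * M) ∧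
    (Nat.card {lam : Fin N → ℕ //
        Antitone lam ∧ dudleyDist (empYoung N lam) ν' < 3 * ε / 2} : ℝ)
      ≤ (2 * (N : ℝ) ^ 2 * ε + N * M + 1) ^ N := by
  have key := young_key M ε hM hε N hN ν' hsupp
  refine ⟨fun lam _ hd j => key lam hd j, ?_⟩
  set B : ℝ := 2 * (N : ℝ) ^ 2 * ε + N * M with hB
  have hBnn : 0 ≤ B := by positivity
  set K : ℕ := ⌊B⌋₊ with hK
  set S := {lam : Fin N → ℕ // Antitone lam ∧ dudleyDist (empYoung N lam) ν' < 3 * ε / 2}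
  have hmem : ∀ (p : S) (j : Fin N), p.1 j < K + 1 := by
    rintro ⟨lam, hanti, hd⟩ j
    have h1 := key lam hd j
    have h2 : ((lam j : ℝ)) ≤ B := by
      refine le_trans ?_ h1
      exact_mod_cast Nat.le_add_right _ _
    have h3 : lam j ≤ K := Nat.le_floor h2
    show lam j < K + 1
    omega
  set F : S → (Fin N → Fin (K + 1)) := fun p j => ⟨p.1 j, hmem p j⟩ with hF
  have hinj : Function.Injective F := by
    rintro ⟨a, ha⟩ ⟨b, hb⟩ h
    ext j
    have := congrFun h j
    simpa [hF] using congrArg Fin.val this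
  have hfin : Finite S := Finite.of_injective F hinj
  have hcard : Nat.card S ≤ (K + 1) ^ N := by
    have := Nat.card_le_card_of_injective F hinj
    simpa [Nat.card_eq_fintype_card] using this
  have hcast : ((K + 1 : ℕ) : ℝ) ≤ B + 1 := by
    push_cast
    linarith [Nat.floor_le hBnn]
  calc (Nat.card S : ℝ) ≤ (((K + 1) ^ N : ℕ) : ℝ) := by exact_mod_cast hcard
    _ = ((K + 1 : ℕ) : ℝ) ^ N := by push_cast; ring
    _ ≤ (B + 1) ^ N := pow_le_pow_left₀ (by positivity) hcast N
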